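/- Let X be a uniform space, κ an infinite cardinal, and suppose the entourage poset of X has calibre (κ⁺, ω), where κ⁺ is the successor cardinal of κ. If A ⊆ X is such that the subspace A is pseudocompact (every continuous real-valued function on A is bounded), then A, with the subspace topology, has a topological base of cardinality at most κ. -/

import Mathlib

open Set Topology Cardinal

universe u

/-- A directed set `P` has calibre `(μ, ω)` if every subset of cardinality `μ`
has an infinite subset with an upper bound. -/
def Calibre (P : Type u) [Preorder P] (μ : Cardinal.{u}) : Prop :=
  ∀ S : Set P, #S = μ → ∃ T ⊆ S, T.Infinite ∧ BddAbove T

/-- The poset of entourages of a uniform space, ordered by reverse inclusion. -/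
abbrev EntouragePoset (X : Type*) [UniformSpace X] :=
  ({U : Set (X × X) // U ∈ uniformity X})ᵒᵈ

section Auxiliary

open Filter UniformSpace
open scoped Uniformity
open scoped SetRel

lemma exists_pseudometric {X : Type u} [uX : UniformSpace X] {V : Set (X × X)} (hV : V ∈ 𝓤 X) :
    ∃ (d : X → X → ℝ) (ε : ℝ), 0 < ε ∧
      (∀ x, d x x = 0) ∧ (∀ x y, d x y = d y x) ∧ (∀ x y z, d x z ≤ d x y + d y z) ∧
      (∀ x y, 0 ≤ d x y) ∧
      Continuous (fun p : X × X => d p.1 p.2) ∧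
      (∀ x y, d x y < ε → (x, y) ∈ V) := by
  classical
  have step : ∀ s ∈ 𝓤 X, ∃ t, t ∈ 𝓤 X ∧ SetRel.IsSymm t ∧ t ○ t ⊆ s := by
    intro s hs
    obtain ⟨t, ht, hts, htc⟩ := comp_symm_mem_uniformity_sets hs
    exact ⟨t, ht, hts, htc⟩
  choose st hstU hstS hstC using step
  -- chain of entourages
  let W : ℕ → {s : Set (X × X) // s ∈ 𝓤 X} :=
    fun n => Nat.rec (⟨st V hV, hstU V hV⟩)
      (fun _ p => ⟨st p.1 p.2, hstU p.1 p.2⟩) n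
  have hWU : ∀ n, (W n).1 ∈ 𝓤 X := fun n => (W n).2
  have hWS : ∀ n, SetRel.IsSymm (W n).1 := by
    intro n; cases n with
    | zero => exact hstS V hV
    | succ m => exact hstS (W m).1 (W m).2
  have hWC : ∀ n, (W (n + 1)).1 ○ (W (n + 1)).1 ⊆ (W n).1 := fun n => hstC (W n).1 (W n).2
  have hW0 : (st V hV) ○ (st V hV) ⊆ V := hstC V hV
  have hrefl : ∀ n (x : X), (x, x) ∈ (W n).1 := fun n x => refl_mem_uniformity (hWU n)
  have hmono : ∀ n, (W (n + 1)).1 ⊆ (W n).1 := by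
    intro n p hp
    exact hWC n (SetRel.prodMk_mem_comp (hrefl (n+1) p.1) hp)
  have hanti : ∀ {n m}, n ≤ m → (W m).1 ⊆ (W n).1 := by
    intro n m h
    induction h with
    | refl => exact fun p hp => hp
    | step h ih => exact fun p hp => ih (hmono _ hp)
  -- filter basis
  let B : FilterBasis (X × X) :=
    { sets := Set.range fun n => (W n).1
      nonempty := ⟨(W 0).1, 0, rfl⟩
      inter_sets := by
        rintro s t ⟨n, rfl⟩ ⟨m, rfl⟩
        exact ⟨(W (max n m)).1, ⟨max n m, rfl⟩,
          subset_inter (hanti (le_max_left n m)) (hanti (le_max_right n m))⟩ }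
  have hmemB : ∀ n, (W n).1 ∈ B := fun n => ⟨n, rfl⟩
  let core : UniformSpace.Core X :=
    UniformSpace.Core.mkOfBasis B
      (by rintro r ⟨n, rfl⟩ x; exact hrefl n x)
      (by rintro r ⟨n, rfl⟩
          exact ⟨(W n).1, hmemB n, by rintro ⟨a, b⟩ hp; haveI := hWS n; exact SetRel.symm (W n).1 hp⟩)
      (by rintro r ⟨n, rfl⟩
          exact ⟨(W (n+1)).1, hmemB (n+1), hWC n⟩)
  let u1 : UniformSpace X := UniformSpace.ofCore core
  have hu1 : @uniformity X u1 = B.filter := rfl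
  have hbasis : (@uniformity X u1).HasBasis (fun _ : ℕ => True) (fun n => (W n).1) := by
    rw [hu1]
    refine Filter.hasBasis_iff.2 fun s => ?_
    rw [FilterBasis.mem_filter_iff]
    constructor
    · rintro ⟨t, ⟨n, rfl⟩, hts⟩; exact ⟨n, trivial, hts⟩
    · rintro ⟨n, -, hts⟩; exact ⟨(W n).1, hmemB n, hts⟩
  haveI cg : @Filter.IsCountablyGenerated _ (@uniformity X u1) := hbasis.isCountablyGenerated
  obtain ⟨I, hI⟩ : ∃ I : PseudoMetricSpace X, I.toUniformSpace = u1 :=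
    @UniformSpace.metrizable_uniformity X u1 cg
  set d : X → X → ℝ := fun x y => @dist X I.toDist x y with hd
  have hIu : @uniformity X I.toUniformSpace = B.filter := by rw [hI, hu1]
  have key : ∀ s : Set (X × X), s ∈ B.filter ↔ ∃ ε > 0, ∀ {a b : X}, d a b < ε → (a, b) ∈ s := by
    intro s
    rw [← hIu]
    exact @Metric.mem_uniformity_dist X I s
  have memb : ∀ ε : ℝ, 0 < ε → {p : X × X | d p.1 p.2 < ε} ∈ B.filter := by
    intro ε hε
    rw [← hIu]
    exact @Metric.dist_mem_uniformity X I ε hε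
  have dself : ∀ x, d x x = 0 := @PseudoMetricSpace.dist_self X I
  have dcomm : ∀ x y, d x y = d y x := @PseudoMetricSpace.dist_comm X I
  have dtri : ∀ x y z, d x z ≤ d x y + d y z := @PseudoMetricSpace.dist_triangle X I
  have dnonneg : ∀ x y, 0 ≤ d x y := fun x y => @dist_nonneg X I x y
  clear hIu hu1 hbasis
  clear_value d
  clear hd
  clear hI
  clear I
  clear cg
  clear u1
  clear core
  have hsub : ∀ s ∈ B.filter, s ∈ 𝓤 X := by
    intro s hs
    rw [FilterBasis.mem_filter_iff] at hs
    obtain ⟨t, ⟨n, rfl⟩, hts⟩ := hs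
    exact mem_of_superset (hWU n) hts
  -- continuity wrt original uniformity
  have hcont : Continuous fun p : X × X => d p.1 p.2 := by
    rw [continuous_iff_continuousAt]
    rintro ⟨x, y⟩
    refine Metric.tendsto_nhds.2 fun ε hε => ?_
    have hE : {p : X × X | d p.1 p.2 < ε / 2} ∈ 𝓤 X := hsub _ (memb (ε / 2) (by linarith))
    have hN : (ball x {p : X × X | d p.1 p.2 < ε / 2} ×ˢ
        ball y {p : X × X | d p.1 p.2 < ε / 2}) ∈ 𝓝 (x, y) :=
      prod_mem_nhds (ball_mem_nhds x hE) (ball_mem_nhds y hE)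
    filter_upwards [hN] with q hq
    obtain ⟨h1, h2⟩ := hq
    have hxx : d x q.1 < ε / 2 := h1
    have hyy : d y q.2 < ε / 2 := h2
    have t1 : d q.1 q.2 ≤ d q.1 x + d x y + d y q.2 := by
      calc d q.1 q.2 ≤ d q.1 x + d x q.2 := dtri _ _ _
        _ ≤ d q.1 x + (d x y + d y q.2) := by linarith [dtri x y q.2]
        _ = d q.1 x + d x y + d y q.2 := by ring
    have t2 : d x y ≤ d x q.1 + d q.1 q.2 + d q.2 y := by
      calc d x y ≤ d x q.1 + d q.1 y := dtri _ _ _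
        _ ≤ d x q.1 + (d q.1 q.2 + d q.2 y) := by linarith [dtri q.1 q.2 y]
        _ = d x q.1 + d q.1 q.2 + d q.2 y := by ring
    have hc1 : d q.1 x = d x q.1 := dcomm _ _
    have hc2 : d q.2 y = d y q.2 := dcomm _ _
    rw [Real.dist_eq, abs_sub_lt_iff]
    constructor <;> linarith
  -- the epsilon
  have hW0B : (W 0).1 ∈ B.filter := B.mem_filter_of_mem (hmemB 0)
  obtain ⟨ε, hε, himp⟩ := (key (W 0).1).1 hW0B
  refine ⟨d, ε, hε, dself, dcomm, dtri, dnonneg, hcont, fun x y hxy => ?_⟩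
  have hxyW : (x, y) ∈ (W 0).1 := himp hxy
  have : (W 0).1 ⊆ V := by
    intro p hp
    exact hW0 (SetRel.prodMk_mem_comp (hrefl 0 p.1) hp)
  exact this hxyW

lemma stepA {X : Type u} [UniformSpace X] (A : Set X)
    (hpc : ∀ f : A → ℝ, Continuous f → ∃ C : ℝ, ∀ x : A, |f x| ≤ C)
    {V₁ : Set (X × X)} (hV₁ : V₁ ∈ 𝓤 X) :
    ∃ F : Finset X, ↑F ⊆ A ∧ ∀ a ∈ A, ∃ c ∈ F, (c, a) ∈ V₁ := by
  classical
  obtain ⟨d, ε, hε, dself, dcomm, dtri, dnonneg, dcont, dball⟩ := exists_pseudometric hV₁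
  by_contra hno
  push_neg at hno
  have hext : ∀ F : Finset X, (∀ c ∈ F, c ∈ A) → ∃ a, a ∈ A ∧ ∀ c ∈ F, ε ≤ d c a := by
    intro F hF
    obtain ⟨a, haA, ha⟩ := hno F (fun c hc => hF c (Finset.mem_coe.1 hc))
    refine ⟨a, haA, fun c hc => ?_⟩
    by_contra hlt
    exact ha c hc (dball c a (lt_of_not_ge hlt))
  have hXne : Nonempty X := ⟨(hext ∅ (by simp)).choose⟩
  let pick : Finset X → X := fun F =>
    if h : ∀ c ∈ F, c ∈ A then (hext F h).choose else Classical.arbitrary X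
  have pickspec : ∀ F : Finset X, (∀ c ∈ F, c ∈ A) →
      pick F ∈ A ∧ ∀ c ∈ F, ε ≤ d c (pick F) := by
    intro F hF
    simp only [pick, dif_pos hF]
    exact (hext F hF).choose_spec
  let g : ℕ → Finset X := fun n => Nat.rec ∅ (fun _ F => insert (pick F) F) n
  let x : ℕ → X := fun n => pick (g n)
  have hg0 : g 0 = ∅ := rfl
  have hgs : ∀ n, g (n + 1) = insert (x n) (g n) := fun n => rfl
  have hgA : ∀ n, ∀ c ∈ g n, c ∈ A := by
    intro n
    induction n with
    | zero => simp [hg0]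
    | succ m ih =>
      rw [hgs m]
      intro c hc
      rcases Finset.mem_insert.1 hc with h | h
      · rw [h]; exact (pickspec (g m) ih).1
      · exact ih c h
  have hxA : ∀ n, x n ∈ A := fun n => (pickspec (g n) (hgA n)).1
  have hmem : ∀ m n, m < n → x m ∈ g n := by
    intro m n h
    induction n with
    | zero => omega
    | succ k ih =>
      rw [hgs k]
      rcases Nat.lt_succ_iff_lt_or_eq.1 h with h' | h'
      · exact Finset.mem_insert_of_mem (ih h')
      · rw [h']; exact Finset.mem_insert_self _ _
  have sep : ∀ m n, m < n → ε ≤ d (x m) (x n) := by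
    intro m n h
    exact (pickspec (g n) (hgA n)).2 (x m) (hmem m n h)
  have sep' : ∀ m n, m ≠ n → ε ≤ d (x m) (x n) := by
    intro m n h
    rcases lt_or_gt_of_ne h with h' | h'
    · exact sep m n h'
    · rw [dcomm]; exact sep n m h'
  -- the unbounded function
  let term : ℕ → A → ℝ := fun n z => (n : ℝ) * max 0 (1 - 4 / ε * d (x n) ↑z)
  let f : A → ℝ := fun z => ∑' n, term n z
  have hsmall : ∀ (n : ℕ) (z : A), ε / 4 ≤ d (x n) ↑z → term n z = 0 := by
    intro n z hd
    have h1 : 4 / ε * (ε / 4) ≤ 4 / ε * d (x n) ↑z :=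
      mul_le_mul_of_nonneg_left hd (by positivity)
    have h2 : 4 / ε * (ε / 4) = 1 := by field_simp
    have : 1 - 4 / ε * d (x n) ↑z ≤ 0 := by rw [← h2]; linarith
    simp only [term, max_eq_left this, mul_zero]
  have termcont : ∀ n, Continuous (term n) := by
    intro n
    have h1 : Continuous fun z : A => d (x n) ↑z :=
      dcont.comp (Continuous.prodMk continuous_const continuous_subtype_val)
    exact continuous_const.mul (Continuous.max continuous_const
      (continuous_const.sub (continuous_const.mul h1)))
  have fcont : Continuous f := by
    rw [continuous_iff_continuousAt]
    intro a
    have uniq : ∀ n m : ℕ, d (x n) ↑a < 3 * ε / 8 → d (x m) ↑a < 3 * ε / 8 → n = m := by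
      intro n m hn hm
      by_contra hne
      have h1 : ε ≤ d (x n) (x m) := sep' n m hne
      have h2 : d (x n) (x m) ≤ d (x n) ↑a + d ↑a (x m) := dtri _ _ _
      have h3 : d ↑a (x m) = d (x m) ↑a := dcomm _ _
      linarith
    set P := ∃ n, d (x n) ↑a < 3 * ε / 8 with hP
    set n₀ : ℕ := if h : P then h.choose else 0 with hn₀
    have hN : {z : A | d ↑a ↑z < ε / 8} ∈ 𝓝 a := by
      have hopen : IsOpen {z : A | d ↑a ↑z < ε / 8} := by
        have h1 : Continuous fun z : A => d ↑a ↑z :=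
          dcont.comp (Continuous.prodMk continuous_const continuous_subtype_val)
        exact isOpen_lt h1 continuous_const
      exact hopen.mem_nhds (by simp only [mem_setOf_eq, dself]; positivity)
    have hzero : ∀ z ∈ {z : A | d ↑a ↑z < ε / 8}, ∀ n, n ≠ n₀ → term n z = 0 := by
      intro z hz n hn
      rcases le_or_gt (ε / 4) (d (x n) ↑z) with h | h
      · exact hsmall n z h
      · exfalso
        have hza : d ↑z ↑a = d ↑a ↑z := dcomm _ _
        have hna : d (x n) ↑a < 3 * ε / 8 := by
          have := dtri (x n) (↑z) (↑a)
          simp only [mem_setOf_eq] at hz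
          linarith
        have hPholds : P := ⟨n, hna⟩
        have : n = hPholds.choose := uniq n _ hna hPholds.choose_spec
        rw [hn₀, dif_pos hPholds] at hn
        exact hn this
    have heq : Set.EqOn (term n₀) f {z : A | d ↑a ↑z < ε / 8} := by
      intro z hz
      exact (tsum_eq_single n₀ (fun n hn => hzero z hz n hn)).symm
    exact (termcont n₀).continuousAt.congr
      (Filter.eventuallyEq_of_mem hN heq)
  obtain ⟨C, hC⟩ := hpc f fcont
  obtain ⟨m, hm⟩ := exists_nat_gt C
  have hfm : f ⟨x m, hxA m⟩ = m := by
    have h1 : ∀ n, n ≠ m → term n ⟨x m, hxA m⟩ = 0 := by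
      intro n hn
      apply hsmall
      have := sep' n m hn
      linarith
    rw [show f ⟨x m, hxA m⟩ = term m ⟨x m, hxA m⟩ from tsum_eq_single m h1]
    simp only [term, Subtype.coe_mk, dself, mul_zero, sub_zero, max_eq_right (zero_le_one), mul_one]
  have := hC ⟨x m, hxA m⟩
  rw [hfm] at this
  have : (m : ℝ) ≤ C := (abs_le.1 this).2
  linarith

lemma ramsey3 {C : Type v} [Finite C] (χ : ℕ → ℕ → C) :
    ∃ n m l : ℕ, n < m ∧ m < l ∧ χ n m = χ m l := by
  classical
  have pig : ∀ (S : Set ℕ), S.Infinite → ∃ y : C,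
      {m ∈ S | sInf S < m ∧ χ (sInf S) m = y}.Infinite := by
    intro S hS
    have h1 : {m ∈ S | sInf S < m}.Infinite := by
      have : {m ∈ S | sInf S < m} = S \ {m | m ≤ sInf S} := by
        ext m; simp [Set.mem_diff, not_le, and_comm]
      rw [this]
      exact hS.diff (Set.finite_Iic (sInf S))
    haveI : Infinite {m // m ∈ S ∧ sInf S < m} := by
      rw [← Set.infinite_coe_iff] at h1
      exact h1
    obtain ⟨y, hy⟩ := Finite.exists_infinite_fiber
      (fun m : {m // m ∈ S ∧ sInf S < m} => χ (sInf S) ↑m)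
    haveI := hy
    refine ⟨y, ?_⟩
    rw [← Set.infinite_coe_iff]
    have : Function.Injective (fun z : ((fun m : {m // m ∈ S ∧ sInf S < m} =>
        χ (sInf S) ↑m) ⁻¹' {y}) =>
        (⟨(z.1 : ℕ), z.1.2.1, z.1.2.2, z.2⟩ :
          {m : ℕ // m ∈ {m ∈ S | sInf S < m ∧ χ (sInf S) m = y}})) := by
      rintro ⟨⟨a, ha⟩, ha'⟩ ⟨⟨b, hb⟩, hb'⟩ h
      simp only [Subtype.mk_eq_mk] at h ⊢
      exact h
    exact Infinite.of_injective _ this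
  let step : {S : Set ℕ // S.Infinite} → {S : Set ℕ // S.Infinite} := fun S =>
    ⟨{m ∈ S.1 | sInf S.1 < m ∧ χ (sInf S.1) m = (pig S.1 S.2).choose},
     (pig S.1 S.2).choose_spec⟩
  let seq : ℕ → {S : Set ℕ // S.Infinite} := fun n =>
    Nat.rec ⟨Set.univ, Set.infinite_univ⟩ (fun _ S => step S) n
  have hseqs : ∀ n, seq (n + 1) = step (seq n) := fun n => rfl
  let a : ℕ → ℕ := fun i => sInf (seq i).1
  have hmem : ∀ i, a (i + 1) ∈ (seq (i + 1)).1 :=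
    fun i => Nat.sInf_mem (seq (i + 1)).2.nonempty
  have hsub : ∀ i, (seq (i + 1)).1 ⊆ (seq i).1 := by
    intro i m hm
    rw [hseqs i] at hm
    exact hm.1
  have hchain : ∀ i j, i ≤ j → (seq j).1 ⊆ (seq i).1 := by
    intro i j h
    induction h with
    | refl => exact fun _ h => h
    | step _ ih => exact fun m hm => ih (hsub _ hm)
  have hkey : ∀ i j, i < j → a i < a j ∧ χ (a i) (a j) = (pig (seq i).1 (seq i).2).choose := by
    intro i j hij
    have h1 : a j ∈ (seq (i + 1)).1 := by
      have : a j ∈ (seq j).1 := Nat.sInf_mem (seq j).2.nonempty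
      exact hchain (i + 1) j hij this
    rw [hseqs i] at h1
    exact ⟨h1.2.1, h1.2.2⟩
  let γ : ℕ → C := fun i => (pig (seq i).1 (seq i).2).choose
  obtain ⟨y, hy⟩ := Finite.exists_infinite_fiber γ
  haveI := hy
  obtain ⟨⟨i, hi⟩, ⟨j, hj⟩, hij⟩ := exists_pair_ne ↥(γ ⁻¹' {y})
  have hne : i ≠ j := fun h => hij (by simp only [Subtype.mk_eq_mk]; exact h)
  rcases hne.lt_or_gt with h | h
  · refine ⟨a i, a j, a (j + 1), (hkey i j h).1, (hkey j (j + 1) (Nat.lt_succ_self j)).1, ?_⟩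
    rw [(hkey i j h).2, (hkey j (j + 1) (Nat.lt_succ_self j)).2]
    show γ i = γ j
    rw [hi, hj]
  · refine ⟨a j, a i, a (i + 1), (hkey j i h).1, (hkey i (i + 1) (Nat.lt_succ_self i)).1, ?_⟩
    rw [(hkey j i h).2, (hkey i (i + 1) (Nat.lt_succ_self i)).2]
    show γ j = γ i
    rw [hi, hj]

lemma exists_mono_seq {W : Type u} (r : W → W → Prop) [IsWellOrder W r]
    (I : Set W) (hI : I.Infinite) :
    ∃ f : ℕ → W, (∀ n, f n ∈ I) ∧ ∀ i j, i < j → r (f i) (f j) := by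
  classical
  have wf : WellFounded r := IsWellFounded.wf
  let step : {S : Set W // S.Infinite} → {S : Set W // S.Infinite} := fun S =>
    ⟨S.1 \ {wf.min S.1 S.2.nonempty}, S.2.diff (Set.finite_singleton _)⟩
  let seq : ℕ → {S : Set W // S.Infinite} := fun n =>
    Nat.rec ⟨I, hI⟩ (fun _ S => step S) n
  have hseqs : ∀ n, (seq (n + 1)).1 = (seq n).1 \ {wf.min (seq n).1 (seq n).2.nonempty} :=
    fun n => rfl
  let f : ℕ → W := fun n => wf.min (seq n).1 (seq n).2.nonempty
  have hsub : ∀ i, (seq (i + 1)).1 ⊆ (seq i).1 := by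
    intro i m hm; rw [hseqs i] at hm; exact hm.1
  have hchain : ∀ i j, i ≤ j → (seq j).1 ⊆ (seq i).1 := by
    intro i j h
    induction h with
    | refl => exact fun _ h => h
    | step _ ih => exact fun m hm => ih (hsub _ hm)
  have hseqI : ∀ n, (seq n).1 ⊆ I := fun n => hchain 0 n (Nat.zero_le n)
  have hfI : ∀ n, f n ∈ I := fun n => hseqI n (wf.min_mem _ _)
  have hstep : ∀ i j, i < j → r (f i) (f j) := by
    intro i j hij
    have h1 : f j ∈ (seq (i + 1)).1 := hchain (i + 1) j hij (wf.min_mem _ _)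
    rw [hseqs i] at h1
    have h2 : f j ∈ (seq i).1 := h1.1
    have h3 : f j ≠ f i := by
      intro h
      exact h1.2 (by rw [Set.mem_singleton_iff, h])
    have h4 : ¬ r (f j) (f i) := wf.not_lt_min _ h2
    rcases trichotomous_of r (f i) (f j) with h | h | h
    · exact h
    · exact absurd h.symm h3
    · exact absurd h h4
  exact ⟨f, hfI, hstep⟩

lemma stepC {X : Type u} [UniformSpace X]
    (κ : Cardinal.{u})
    (hcal : Calibre (EntouragePoset X) (Order.succ κ))
    (A : Set X)
    (hpc : ∀ f : A → ℝ, Continuous f → ∃ C : ℝ, ∀ x : A, |f x| ≤ C) :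
    ∃ 𝔅 : Set (Set (X × X)), #𝔅 ≤ κ ∧ (∀ V ∈ 𝔅, V ∈ 𝓤 X) ∧
      ∀ W ∈ 𝓤 X, ∃ V ∈ 𝔅, ∀ p : X × X, p ∈ V → p.1 ∈ A → p.2 ∈ A → p ∈ W := by
  classical
  by_contra hno
  push_neg at hno
  -- hno : ∀ 𝔅, #𝔅 ≤ κ → (∀ V ∈ 𝔅, V ∈ 𝓤 X) → ∃ W ∈ 𝓤 X, ∀ V ∈ 𝔅, ∃ p ∈ V, ...
  have Hneg : ∀ 𝔅 : Set (Set (X × X)), #𝔅 ≤ κ → (∀ V ∈ 𝔅, V ∈ 𝓤 X) →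
      ∃ W, W ∈ 𝓤 X ∧ ∀ V ∈ 𝔅, ∃ p : X × X, p ∈ V ∧ p.1 ∈ A ∧ p.2 ∈ A ∧ p ∉ W := by
    intro 𝔅 h1 h2
    obtain ⟨W, hW1, hW2⟩ := hno 𝔅 h1 h2
    refine ⟨W, hW1, fun V hV => ?_⟩
    obtain ⟨p, hp1, hp2⟩ := hW2 V hV
    exact ⟨p, hp1, hp2⟩
  -- the index well-order
  set κs := Order.succ κ with hκs
  let Wt : Type u := κs.out
  obtain ⟨r, wo, hord⟩ := Cardinal.ord_eq Wt
  haveI := wo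
  have hmkWt : #Wt = κs := Cardinal.mk_out κs
  have hcardIio : ∀ x : Wt, #{y // r y x} ≤ κ := by
    intro x
    have h1 : (Ordinal.typein r x).card < #Wt := Cardinal.card_typein_lt x hord
    rw [Ordinal.card_typein] at h1
    rw [hmkWt, hκs, Order.lt_succ_iff] at h1
    exact h1
  -- total choice functions
  let goodW : Set (Set (X × X)) → Set (X × X) := fun 𝔅 =>
    if h : ∃ W, W ∈ 𝓤 X ∧ ∀ V ∈ 𝔅, ∃ p : X × X, p ∈ V ∧ p.1 ∈ A ∧ p.2 ∈ A ∧ p ∉ W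
    then h.choose else Set.univ
  have goodWmem : ∀ 𝔅, goodW 𝔅 ∈ 𝓤 X := by
    intro 𝔅
    by_cases h : ∃ W, W ∈ 𝓤 X ∧ ∀ V ∈ 𝔅, ∃ p : X × X, p ∈ V ∧ p.1 ∈ A ∧ p.2 ∈ A ∧ p ∉ W
    · simp only [goodW, dif_pos h]; exact h.choose_spec.1
    · simp only [goodW, dif_neg h]; exact univ_mem
  have goodWspec : ∀ 𝔅 : Set (Set (X × X)), #𝔅 ≤ κ → (∀ V ∈ 𝔅, V ∈ 𝓤 X) →
      ∀ V ∈ 𝔅, ∃ p : X × X, p ∈ V ∧ p.1 ∈ A ∧ p.2 ∈ A ∧ p ∉ goodW 𝔅 := by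
    intro 𝔅 h1 h2
    have h := Hneg 𝔅 h1 h2
    simp only [goodW, dif_pos h]
    exact h.choose_spec.2
  let sh : Set (X × X) → Set (X × X) := fun s =>
    if h : s ∈ 𝓤 X then (comp3_mem_uniformity h).choose else Set.univ
  have shmem : ∀ s, sh s ∈ 𝓤 X := by
    intro s
    by_cases h : s ∈ 𝓤 X
    · simp only [sh, dif_pos h]; exact (comp3_mem_uniformity h).choose_spec.1
    · simp only [sh, dif_neg h]; exact univ_mem
  have shcomp : ∀ s, s ∈ 𝓤 X → sh s ○ (sh s ○ sh s) ⊆ s := by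
    intro s h
    simp only [sh, dif_pos h]
    exact (comp3_mem_uniformity h).choose_spec.2
  have wf : WellFounded r := IsWellFounded.wf
  -- the transfinite sequence of entourages
  let ι : Wt → Set (X × X) :=
    wf.fix (fun x rec => sh (goodW {s | ∃ y, ∃ h : r y x, rec y h = s}))
  let prev : Wt → Set (Set (X × X)) := fun x => {s | ∃ y, r y x ∧ ι y = s}
  have hset : ∀ x, {s | ∃ y, ∃ _ : r y x, ι y = s} = prev x := by
    intro x
    ext s
    constructor
    · rintro ⟨y, h, rfl⟩; exact ⟨y, h, rfl⟩
    · rintro ⟨y, h, rfl⟩; exact ⟨y, h, rfl⟩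
  have hι : ∀ x, ι x = sh (goodW (prev x)) := by
    intro x
    show wf.fix _ x = _
    rw [WellFounded.fix_eq]
    show sh (goodW {s | ∃ y, ∃ _ : r y x, ι y = s}) = _
    rw [hset x]
  have hιU : ∀ x, ι x ∈ 𝓤 X := by
    intro x; rw [hι]; exact shmem _
  have hprevU : ∀ x, ∀ s ∈ prev x, s ∈ 𝓤 X := by
    rintro x s ⟨y, _, rfl⟩; exact hιU y
  have hprevcard : ∀ x, #(prev x) ≤ κ := by
    intro x
    have : prev x = Set.range (fun y : {y // r y x} => ι y.1) := by
      ext s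
      constructor
      · rintro ⟨y, hy, rfl⟩; exact ⟨⟨y, hy⟩, rfl⟩
      · rintro ⟨⟨y, hy⟩, rfl⟩; exact ⟨y, hy, rfl⟩
    rw [this]
    exact le_trans Cardinal.mk_range_le (hcardIio x)
  have hgood : ∀ x, ∀ V ∈ prev x,
      ∃ p : X × X, p ∈ V ∧ p.1 ∈ A ∧ p.2 ∈ A ∧ p ∉ goodW (prev x) :=
    fun x => goodWspec (prev x) (hprevcard x) (hprevU x)
  have hcomp : ∀ x, ι x ○ (ι x ○ ι x) ⊆ goodW (prev x) := by
    intro x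
    rw [hι]
    exact shcomp _ (goodWmem _)
  have hselfsub : ∀ x, ι x ⊆ goodW (prev x) := by
    intro x p hp
    have h1 : (p.1, p.1) ∈ ι x := refl_mem_uniformity (hιU x)
    have h2 : (p.2, p.2) ∈ ι x := refl_mem_uniformity (hιU x)
    have : (p.1, p.2) ∈ ι x ○ (ι x ○ ι x) :=
      SetRel.prodMk_mem_comp h1 (SetRel.prodMk_mem_comp hp h2)
    exact hcomp x this
  have hinj : Function.Injective ι := by
    intro a b hab
    by_contra hne
    have key : ∀ c d : Wt, r c d → ι c = ι d → False := by
      intro c d hcd hicd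
      obtain ⟨p, hp1, -, -, hp4⟩ := hgood d (ι c) ⟨c, hcd, rfl⟩
      rw [hicd] at hp1
      exact hp4 (hselfsub d hp1)
    rcases trichotomous_of r a b with h | h | h
    · exact key a b h hab
    · exact hne h
    · exact key b a h hab.symm
  -- apply calibre
  let ι' : Wt → {U : Set (X × X) // U ∈ 𝓤 X} := fun x => ⟨ι x, hιU x⟩
  have hι'inj : Function.Injective ι' := by
    intro a b h
    apply hinj
    exact Subtype.mk_eq_mk.1 h
  have hS : #(Set.range ι') = κs := by
    rw [Cardinal.mk_range_eq ι' hι'inj, hmkWt]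
  obtain ⟨T, hTS, hTinf, Vb, hVb⟩ := hcal (Set.range ι') hS
  have hVb' : ∀ t ∈ T, (Vb : {U : Set (X × X) // U ∈ 𝓤 X}).1 ⊆
      (t : {U : Set (X × X) // U ∈ 𝓤 X}).1 := fun t ht => hVb ht
  let I : Set Wt := ι' ⁻¹' T
  have hIinf : I.Infinite := by
    have hsub : T ⊆ ι' '' I := by
      intro t ht
      obtain ⟨x, rfl⟩ := hTS ht
      exact ⟨x, ht, rfl⟩
    exact ((hTinf.mono hsub)).of_image ι'
  obtain ⟨α, hαI, hαmono⟩ := exists_mono_seq r I hIinf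
  have hVbU : ∀ n, (Vb : {U : Set (X × X) // U ∈ 𝓤 X}).1 ⊆ ι (α n) :=
    fun n => hVb' (ι' (α n)) (hαI n)
  -- symmetric small entourages
  let V : Set (X × X) := SetRel.symmetrize (Vb : {U : Set (X × X) // U ∈ 𝓤 X}).1
  have hVmem : V ∈ 𝓤 X := symmetrize_mem_uniformity
    (Vb : {U : Set (X × X) // U ∈ 𝓤 X}).2
  have hVsym : SetRel.IsSymm V := by dsimp only [V]; infer_instance
  have hVsub : ∀ n, V ⊆ ι (α n) :=
    fun n => SetRel.symmetrize_subset_self.trans (hVbU n)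
  obtain ⟨V₁, hV₁U, hV₁sym, hV₁comp⟩ := comp_symm_mem_uniformity_sets hVmem
  obtain ⟨F, hFA, hFnet⟩ := stepA A hpc hV₁U
  -- witnesses
  let qf : ℕ → ℕ → X × X := fun n m =>
    if h : n < m then
      (hgood (α m) (ι (α n)) ⟨α n, hαmono n m h, rfl⟩).choose
    else (hgood (α 1) (ι (α 0)) ⟨α 0, hαmono 0 1 Nat.one_pos, rfl⟩).choose
  have qfspec : ∀ n m, n < m → qf n m ∈ ι (α n) ∧ (qf n m).1 ∈ A ∧ (qf n m).2 ∈ A ∧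
      qf n m ∉ goodW (prev (α m)) := by
    intro n m h
    simp only [qf, dif_pos h]
    exact (hgood (α m) (ι (α n)) ⟨α n, hαmono n m h, rfl⟩).choose_spec
  let cell : X → X := fun a => if h : a ∈ A then (hFnet a h).choose else a
  have cellspec : ∀ a, ∀ _ : a ∈ A, cell a ∈ F ∧ (cell a, a) ∈ V₁ := by
    intro a ha
    simp only [cell, dif_pos ha]
    obtain ⟨h1, h2⟩ := (hFnet a ha).choose_spec
    exact ⟨h1, h2⟩
  let χ : ℕ → ℕ → Option ({c // c ∈ F} × {c // c ∈ F}) := fun n m =>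
    if h : n < m then
      some (⟨cell (qf n m).1, (cellspec _ (qfspec n m h).2.1).1⟩,
            ⟨cell (qf n m).2, (cellspec _ (qfspec n m h).2.2.1).1⟩)
    else none
  obtain ⟨n, m, l, hnm, hml, hχ⟩ := ramsey3 χ
  simp only [χ, dif_pos hnm, dif_pos hml, Option.some_inj, Prod.mk.injEq,
    Subtype.mk_eq_mk] at hχ
  obtain ⟨e1, e2⟩ := hχ
  obtain ⟨hq1, hx1A, hy1A, hq1not⟩ := qfspec n m hnm
  obtain ⟨hq2, hx2A, hy2A, hq2not⟩ := qfspec m l hml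
  have hcx : ((qf n m).1, (qf m l).1) ∈ V := by
    apply hV₁comp
    refine SetRel.prodMk_mem_comp ((haveI := hV₁sym; SetRel.symm _ (cellspec _ hx1A).2)) ?_
    rw [e1]
    exact (cellspec _ hx2A).2
  have hcy : ((qf m l).2, (qf n m).2) ∈ V := by
    apply hV₁comp
    refine SetRel.prodMk_mem_comp ((haveI := hV₁sym; SetRel.symm _ (cellspec _ hy2A).2)) ?_
    rw [← e2]
    exact (cellspec _ hy1A).2
  have hq2' : ((qf m l).1, (qf m l).2) ∈ ι (α m) := by
    rw [Prod.mk.eta]; exact hq2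
  have hchain : ((qf n m).1, (qf n m).2) ∈ V ○ (ι (α m) ○ V) :=
    SetRel.prodMk_mem_comp hcx (SetRel.prodMk_mem_comp hq2' hcy)
  have hsubchain : V ○ (ι (α m) ○ V) ⊆ goodW (prev (α m)) := by
    intro p hp
    exact hcomp (α m)
      (SetRel.comp_subset_comp (hVsub m) (SetRel.comp_subset_comp (subset_refl _) (hVsub m)) hp)
  apply hq1not
  have := hsubchain hchain
  rwa [Prod.mk.eta] at this


end Auxiliary

section Main

open Filter UniformSpace
open scoped Uniformity
open scoped SetRel

theorem stmt12 {X : Type u} [UniformSpace X]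
    (κ : Cardinal.{u}) (hκ : ℵ₀ ≤ κ)
    (hcal : Calibre (EntouragePoset X) (Order.succ κ))
    (A : Set X)
    (hpc : ∀ f : A → ℝ, Continuous f → ∃ C : ℝ, ∀ x : A, |f x| ≤ C) :
    ∃ B : Set (Set A), #B ≤ κ ∧ TopologicalSpace.IsTopologicalBasis B := by
  classical
  obtain ⟨𝔅₀, hcard, hmemU, hbase⟩ := stepC κ hcal A hpc
  -- open symmetric refinements
  have hshr : ∀ V, V ∈ 𝓤 X → ∃ G, (G ∈ 𝓤 X ∧ IsOpen G ∧ SetRel.IsSymm G) ∧ G ⊆ V := by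
    intro V hV
    exact uniformity_hasBasis_open_symmetric.mem_iff.1 hV
  let G : Set (X × X) → Set (X × X) := fun V =>
    if h : V ∈ 𝓤 X then (hshr V h).choose else Set.univ
  have Gmem : ∀ V, V ∈ 𝓤 X → G V ∈ 𝓤 X := by
    intro V h; simp only [G, dif_pos h]; exact (hshr V h).choose_spec.1.1
  have Gopen : ∀ V, V ∈ 𝓤 X → IsOpen (G V) := by
    intro V h; simp only [G, dif_pos h]; exact (hshr V h).choose_spec.1.2.1
  have Gsub : ∀ V, V ∈ 𝓤 X → G V ⊆ V := by
    intro V h; simp only [G, dif_pos h]; exact (hshr V h).choose_spec.2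
  -- nets
  have hnet : ∀ V, V ∈ 𝓤 X → ∃ F : Finset X, ↑F ⊆ A ∧ ∀ a ∈ A, ∃ c ∈ F, (c, a) ∈ G V :=
    fun V h => stepA A hpc (Gmem V h)
  let net : Set (X × X) → Finset X := fun V =>
    if h : V ∈ 𝓤 X then (hnet V h).choose else ∅
  have netA : ∀ V, V ∈ 𝓤 X → ∀ c ∈ net V, c ∈ A := by
    intro V h c hc
    simp only [net, dif_pos h] at hc
    exact (hnet V h).choose_spec.1 hc
  have netspec : ∀ V, V ∈ 𝓤 X → ∀ a ∈ A, ∃ c ∈ net V, (c, a) ∈ G V := by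
    intro V h
    simp only [net, dif_pos h]
    exact (hnet V h).choose_spec.2
  -- the basis
  let bset : Set (X × X) → X → Set A := fun V c => {z : A | (c, (z : X)) ∈ G V}
  let B : Set (Set A) := ⋃ V : 𝔅₀, (bset V.1) '' ↑(net V.1)
  refine ⟨B, ?_, ?_⟩
  · -- cardinality
    calc #B ≤ Cardinal.sum (fun V : 𝔅₀ => #((bset V.1) '' ↑(net V.1))) :=
          Cardinal.mk_iUnion_le_sum_mk
      _ ≤ Cardinal.sum (fun _ : 𝔅₀ => ℵ₀) := by
          apply Cardinal.sum_le_sum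
          intro V
          exact ((Set.Finite.image _ (Finset.finite_toSet _)).lt_aleph0).le
      _ = #𝔅₀ * ℵ₀ := by rw [Cardinal.sum_const']
      _ ≤ κ * κ := mul_le_mul' hcard hκ
      _ = κ := Cardinal.mul_eq_self hκ
  · apply TopologicalSpace.isTopologicalBasis_of_isOpen_of_nhds
    · rintro S hS
      obtain ⟨V, hV⟩ := Set.mem_iUnion.1 hS
      obtain ⟨c, -, rfl⟩ := hV
      have : bset V.1 c = (fun z : A => ((c : X), (z : X))) ⁻¹' (G V.1) := rfl
      rw [this]
      exact (Gopen V.1 (hmemU V.1 V.2)).preimage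
        (continuous_const.prodMk continuous_subtype_val)
    · intro a u hau hu
      have hmem : u ∈ 𝓝 a := hu.mem_nhds hau
      rw [nhds_subtype] at hmem
      obtain ⟨t, ht, hts⟩ := Filter.mem_comap.1 hmem
      obtain ⟨U₀, hU₀, hball⟩ := UniformSpace.mem_nhds_iff.1 ht
      obtain ⟨W, hWU, hWsym, hWcomp⟩ := comp_symm_mem_uniformity_sets hU₀
      obtain ⟨V, hV𝔅, htrace⟩ := hbase W hWU
      have hVU : V ∈ 𝓤 X := hmemU V hV𝔅
      obtain ⟨c, hcnet, hca⟩ := netspec V hVU ↑a a.2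
      refine ⟨bset V c, ?_, hca, ?_⟩
      · exact Set.mem_iUnion.2 ⟨⟨V, hV𝔅⟩, Set.mem_image_of_mem _ hcnet⟩
      · intro z hz
        have hcA : c ∈ A := netA V hVU c hcnet
        have h1 : ((c : X), (z : X)) ∈ W :=
          htrace _ (Gsub V hVU hz) hcA z.2
        have h2 : ((c : X), (a : X)) ∈ W :=
          htrace _ (Gsub V hVU hca) hcA a.2
        have h3 : ((a : X), (c : X)) ∈ W := (haveI := hWsym; SetRel.symm _ h2)
        have h4 : ((a : X), (z : X)) ∈ U₀ := hWcomp (SetRel.prodMk_mem_comp h3 h1)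
        exact hts (hball h4)

end Main
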